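/- Let E be a two-dimensional vector space over a field K of characteristic ≠ 2 with a nondegenerate symmetric bilinear form Q. Then there exist vectors a, b, c, d ∈ E, no two proportional, such that Q(a,c)Q(b,d) ≠ Q(a,d)Q(b,c). -/

import Mathlib

theorem stmt6 {K E : Type*} [Field K] [AddCommGroup E] [Module K E]
    [FiniteDimensional K E] (hdim : Module.finrank K E = 2)
    (hchar : ringChar K ≠ 2)
    (Q : E →ₗ[K] E →ₗ[K] K) (hQ : ∀ x y, Q x y = Q y x)
    (hnd : ∀ v : E, (∀ w : E, Q v w = 0) → v = 0) :
    ∃ a b c d : E,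
      (¬ ∃ t : K, b = t • a ∨ a = t • b) ∧
      (¬ ∃ t : K, c = t • a ∨ a = t • c) ∧
      (¬ ∃ t : K, d = t • a ∨ a = t • d) ∧
      (¬ ∃ t : K, c = t • b ∨ b = t • c) ∧
      (¬ ∃ t : K, d = t • b ∨ b = t • d) ∧
      (¬ ∃ t : K, d = t • c ∨ c = t • d) ∧
      Q a c * Q b d ≠ Q a d * Q b c := by
  have h2 : (2 : K) ≠ 0 := Ring.two_ne_zero hchar
  obtain ⟨B⟩ : Nonempty (Module.Basis (Fin 2) K E) :=
    ⟨Module.finBasisOfFinrankEq K E hdim⟩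
  set e := B 0 with he
  set f := B 1 with hf
  have hli : ∀ s t : K, s • e + t • f = 0 → s = 0 ∧ t = 0 := by
    intro s t hst
    have := Fintype.linearIndependent_iff.mp B.linearIndependent ![s, t]
      (by simpa [Fin.sum_univ_two] using hst)
    exact ⟨this 0, this 1⟩
  refine ⟨e, f, e + f, e - f, ?_, ?_, ?_, ?_, ?_, ?_, ?_⟩
  · rintro ⟨t, h | h⟩
    · obtain ⟨h1, hx⟩ := hli t (-1) (by rw [h]; module)
      exact one_ne_zero (neg_eq_zero.mp hx)
    · exact one_ne_zero (hli 1 (-t) (by rw [h]; module)).1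
  · rintro ⟨t, h | h⟩
    · obtain ⟨h1, hx⟩ := hli (t - 1) (-1)
        (by rw [show (t - 1) • e + (-1 : K) • f = t • e - (e + f) by module, ← h]; abel)
      exact one_ne_zero (neg_eq_zero.mp hx)
    · obtain ⟨h1, hx⟩ := hli (1 - t) (-t)
        (by rw [show (1 - t) • e + (-t) • f = e - t • (e + f) by module, ← h]; abel)
      exact one_ne_zero (by linear_combination h1 - hx)
  · rintro ⟨t, h | h⟩
    · obtain ⟨h1, hx⟩ := hli (t - 1) 1
        (by rw [show (t - 1) • e + (1 : K) • f = t • e - (e - f) by module, ← h]; abel)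
      exact one_ne_zero hx
    · obtain ⟨h1, hx⟩ := hli (1 - t) t
        (by rw [show (1 - t) • e + t • f = e - t • (e - f) by module, ← h]; abel)
      exact one_ne_zero (by linear_combination h1 + hx)
  · rintro ⟨t, h | h⟩
    · obtain ⟨h1, hx⟩ := hli 1 (1 - t)
        (by rw [show (1 : K) • e + (1 - t) • f = (e + f) - t • f by module, ← h]; abel)
      exact one_ne_zero h1
    · obtain ⟨h1, hx⟩ := hli (-t) (1 - t)
        (by rw [show (-t) • e + (1 - t) • f = f - t • (e + f) by module, ← h]; abel)
      exact one_ne_zero (by linear_combination hx - h1)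
  · rintro ⟨t, h | h⟩
    · obtain ⟨h1, hx⟩ := hli 1 (-1 - t)
        (by rw [show (1 : K) • e + (-1 - t) • f = (e - f) - t • f by module, ← h]; abel)
      exact one_ne_zero h1
    · obtain ⟨h1, hx⟩ := hli (-t) (1 + t)
        (by rw [show (-t) • e + (1 + t) • f = f - t • (e - f) by module, ← h]; abel)
      exact one_ne_zero (by linear_combination hx + h1)
  · rintro ⟨t, h | h⟩
    · obtain ⟨h1, hx⟩ := hli (1 - t) (-1 - t)
        (by rw [show (1 - t) • e + (-1 - t) • f = (e - f) - t • (e + f) by module, ← h]; abel)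
      exact h2 (by linear_combination h1 - hx)
    · obtain ⟨h1, hx⟩ := hli (1 - t) (1 + t)
        (by rw [show (1 - t) • e + (1 + t) • f = (e + f) - t • (e - f) by module, ← h]; abel)
      exact h2 (by linear_combination h1 + hx)
  · -- the main inequality
    have hfe : Q f e = Q e f := hQ f e
    have hdisc : Q e f * Q e f ≠ Q e e * Q f f := by
      intro hdq
      by_cases hqr : Q e f = 0 ∧ Q f f = 0
      · refine B.ne_zero 1 (hnd f fun w => ?_)
        have g0 : Q f e = 0 := by rw [hfe]; exact hqr.1
        have hQf : Q f = 0 := B.ext (by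
          intro i; fin_cases i
          · exact g0
          · exact hqr.2)
        rw [hQf]; rfl
      · have g0 : Q (Q f f • e + (-(Q e f)) • f) e = 0 := by
          simp only [map_add, map_smul, LinearMap.add_apply, LinearMap.smul_apply,
            smul_eq_mul, hfe]
          linear_combination -hdq
        have g1 : Q (Q f f • e + (-(Q e f)) • f) f = 0 := by
          simp only [map_add, map_smul, LinearMap.add_apply, LinearMap.smul_apply,
            smul_eq_mul]
          ring
        have hv : Q f f • e + (-(Q e f)) • f = 0 := by
          refine hnd _ fun w => ?_
          have hQv : Q (Q f f • e + (-(Q e f)) • f) = 0 := B.ext (by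
            intro i; fin_cases i
            · exact g0
            · exact g1)
          rw [hQv]; rfl
        obtain ⟨h1, hx⟩ := hli _ _ hv
        exact hqr ⟨neg_eq_zero.mp hx, h1⟩
    intro heq
    simp only [map_add, map_sub, hfe] at heq
    exact hdisc (mul_left_cancel₀ h2 (by linear_combination heq))
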